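/- Suppose the real sequence (a_m)_{m≥0} converges to 0. Define u_m = 5^{-m}(a_0 - (9/7) Σ_{k=1}^∞ 3^{-k} a_k + (2/7) Σ_{k=1}^m 5^k a_k) + (9/7) Σ_{k=1}^∞ 3^{-k} a_{m+k} for m ≥ 2. Then u_m → 0 as m → ∞. -/

import Mathlib

open Filter

private lemma stmt9_geo_summable : Summable (fun k : ℕ => ((1:ℝ)/3)^(k+1)) := by
  have h : Summable (fun k : ℕ => ((1:ℝ)/3)^k) :=
    summable_geometric_of_lt_one (by norm_num) (by norm_num)
  simpa [pow_succ] using h.mul_right ((1:ℝ)/3)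

/-- if a_m → 0 then the explicit solution values u(y_m) tend to 0. -/
theorem stmt9 (a : ℕ → ℝ) (ha : Filter.Tendsto a Filter.atTop (nhds 0)) :
    Filter.Tendsto (fun m : ℕ =>
      ((1:ℝ)/5)^m * (a 0 - (9/7) * (∑' k : ℕ, ((1:ℝ)/3)^(k+1) * a (k+1))
        + (2/7) * ∑ k ∈ Finset.Icc 1 m, (5:ℝ)^k * a k)
      + (9/7) * ∑' k : ℕ, ((1:ℝ)/3)^(k+1) * a (m + (k+1)))
      Filter.atTop (nhds 0) := by
  -- a is bounded
  obtain ⟨M, hM⟩ : ∃ M : ℝ, ∀ n, |a n| ≤ M := by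
    obtain ⟨M, hM⟩ := ha.norm.bddAbove_range
    exact ⟨M, fun n => by simpa [Real.norm_eq_abs] using hM ⟨n, rfl⟩⟩
  have hM0 : 0 ≤ M := le_trans (abs_nonneg _) (hM 0)
  have h15 : Tendsto (fun m : ℕ => ((1:ℝ)/5)^m) atTop (nhds 0) :=
    tendsto_pow_atTop_nhds_zero_of_lt_one (by norm_num) (by norm_num)
  -- Part A
  have hA : Tendsto (fun m : ℕ => ((1:ℝ)/5)^m *
      (a 0 - (9/7) * (∑' k : ℕ, ((1:ℝ)/3)^(k+1) * a (k+1)))) atTop (nhds 0) := by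
    simpa using h15.mul_const (a 0 - (9/7) * (∑' k : ℕ, ((1:ℝ)/3)^(k+1) * a (k+1)))
  -- Part B
  have hB : Tendsto (fun m : ℕ => ((1:ℝ)/5)^m * ∑ k ∈ Finset.Icc 1 m, (5:ℝ)^k * a k)
      atTop (nhds 0) := by
    rw [NormedAddCommGroup.tendsto_nhds_zero]
    intro ε hε
    obtain ⟨N, hN⟩ := Metric.tendsto_atTop.mp ha (ε/4) (by positivity)
    have hN' : ∀ n ≥ N, |a n| < ε/4 := by
      intro n hn
      simpa [Real.dist_eq] using hN n hn
    set C : ℝ := ∑ k ∈ Finset.Ioc 0 N, (5:ℝ)^k * |a k| with hCdef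
    have hC0 : 0 ≤ C := Finset.sum_nonneg fun k _ => by positivity
    have h1 : Tendsto (fun m : ℕ => ((1:ℝ)/5)^m * C) atTop (nhds 0) := by
      simpa using h15.mul_const C
    have h2 : ∀ᶠ m : ℕ in atTop, ((1:ℝ)/5)^m * C < ε/2 :=
      h1.eventually (gt_mem_nhds (show (0:ℝ) < ε/2 by linarith))
    filter_upwards [h2, eventually_ge_atTop N] with m hm hmN
    have hsplit : (∑ k ∈ Finset.Icc 1 m, (5:ℝ)^k * a k) =
        (∑ k ∈ Finset.Ioc 0 N, (5:ℝ)^k * a k) + ∑ k ∈ Finset.Ioc N m, (5:ℝ)^k * a k := by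
      rw [show Finset.Icc 1 m = Finset.Ioc 0 m by rfl]
      exact (Finset.sum_Ioc_consecutive _ (Nat.zero_le N) hmN).symm
    have hS1 : |∑ k ∈ Finset.Ioc 0 N, (5:ℝ)^k * a k| ≤ C := by
      refine (Finset.abs_sum_le_sum_abs _ _).trans ?_
      refine Finset.sum_le_sum fun k _ => ?_
      rw [abs_mul, abs_of_nonneg (by positivity : (0:ℝ) ≤ (5:ℝ)^k)]
    have hS2 : |∑ k ∈ Finset.Ioc N m, (5:ℝ)^k * a k| ≤ (ε/4) * ((5:ℝ)^(m+1)/4) := by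
      refine (Finset.abs_sum_le_sum_abs _ _).trans ?_
      have hle : ∀ k ∈ Finset.Ioc N m, |(5:ℝ)^k * a k| ≤ (ε/4) * (5:ℝ)^k := by
        intro k hk
        rw [abs_mul, abs_of_nonneg (by positivity : (0:ℝ) ≤ (5:ℝ)^k)]
        have := (hN' k (le_of_lt (Finset.mem_Ioc.mp hk).1)).le
        calc (5:ℝ)^k * |a k| ≤ (5:ℝ)^k * (ε/4) := by
              exact mul_le_mul_of_nonneg_left this (by positivity)
          _ = (ε/4) * (5:ℝ)^k := by ring
      refine (Finset.sum_le_sum hle).trans ?_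
      rw [← Finset.mul_sum]
      refine mul_le_mul_of_nonneg_left ?_ (by positivity)
      have hsub : Finset.Ioc N m ⊆ Finset.range (m+1) := by
        intro k hk
        simp only [Finset.mem_range, Nat.lt_succ_iff]
        exact (Finset.mem_Ioc.mp hk).2
      have := Finset.sum_le_sum_of_subset_of_nonneg hsub
        (fun k _ _ => by positivity : ∀ k ∈ Finset.range (m+1), k ∉ Finset.Ioc N m → (0:ℝ) ≤ (5:ℝ)^k)
      refine this.trans ?_
      have hg : ∑ k ∈ Finset.range (m+1), (5:ℝ)^k = ((5:ℝ)^(m+1) - 1)/(5-1) := by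
        rw [geom_sum_eq (by norm_num : (5:ℝ) ≠ 1)]
      rw [hg]
      have : (0:ℝ) < 5^(m+1) := by positivity
      nlinarith
    rw [Real.norm_eq_abs, hsplit, abs_mul,
      abs_of_nonneg (by positivity : (0:ℝ) ≤ ((1:ℝ)/5)^m)]
    have habs : |(∑ k ∈ Finset.Ioc 0 N, (5:ℝ)^k * a k) + ∑ k ∈ Finset.Ioc N m, (5:ℝ)^k * a k|
        ≤ C + (ε/4) * ((5:ℝ)^(m+1)/4) :=
      (abs_add_le _ _).trans (add_le_add hS1 hS2)
    calc ((1:ℝ)/5)^m * |(∑ k ∈ Finset.Ioc 0 N, (5:ℝ)^k * a k)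
            + ∑ k ∈ Finset.Ioc N m, (5:ℝ)^k * a k|
        ≤ ((1:ℝ)/5)^m * (C + (ε/4) * ((5:ℝ)^(m+1)/4)) :=
          mul_le_mul_of_nonneg_left habs (by positivity)
      _ = ((1:ℝ)/5)^m * C + ((1:ℝ)/5)^m * (5:ℝ)^m * (5 * ε/16) := by ring
      _ = ((1:ℝ)/5)^m * C + 5 * ε/16 := by
          rw [← mul_pow]; norm_num
      _ < ε/2 + 5*ε/16 := by linarith
      _ < ε := by linarith
  -- summability of tails
  have hsum : ∀ m : ℕ, Summable (fun k : ℕ => ((1:ℝ)/3)^(k+1) * a (m + (k+1))) := by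
    intro m
    refine Summable.of_norm_bounded (g := fun k => ((1:ℝ)/3)^(k+1) * M)
      (stmt9_geo_summable.mul_right M) fun k => ?_
    rw [Real.norm_eq_abs, abs_mul, abs_of_nonneg (by positivity : (0:ℝ) ≤ ((1:ℝ)/3)^(k+1))]
    exact mul_le_mul_of_nonneg_left (hM _) (by positivity)
  -- Part C
  have hC : Tendsto (fun m : ℕ => ∑' k : ℕ, ((1:ℝ)/3)^(k+1) * a (m + (k+1)))
      atTop (nhds 0) := by
    rw [NormedAddCommGroup.tendsto_nhds_zero]
    intro ε hε
    obtain ⟨N, hN⟩ := Metric.tendsto_atTop.mp ha (ε/2) (by positivity)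
    have hN' : ∀ n ≥ N, |a n| ≤ ε/2 := by
      intro n hn
      have := hN n hn
      rw [Real.dist_eq, sub_zero] at this
      linarith
    filter_upwards [eventually_ge_atTop N] with m hm
    rw [Real.norm_eq_abs]
    have hbd : |∑' k : ℕ, ((1:ℝ)/3)^(k+1) * a (m + (k+1))|
        ≤ ∑' k : ℕ, ((1:ℝ)/3)^(k+1) * (ε/2) := by
      have h1 : |∑' k : ℕ, ((1:ℝ)/3)^(k+1) * a (m + (k+1))|
          ≤ ∑' k : ℕ, |((1:ℝ)/3)^(k+1) * a (m + (k+1))| := by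
        simpa only [Real.norm_eq_abs] using
          norm_tsum_le_tsum_norm (f := fun k : ℕ => ((1:ℝ)/3)^(k+1) * a (m + (k+1)))
            (by simpa only [Real.norm_eq_abs] using (hsum m).abs)
      refine h1.trans ?_
      refine Summable.tsum_le_tsum (fun k => ?_) (hsum m).abs (stmt9_geo_summable.mul_right (ε/2))
      rw [abs_mul, abs_of_nonneg (by positivity : (0:ℝ) ≤ ((1:ℝ)/3)^(k+1))]
      exact mul_le_mul_of_nonneg_left (hN' _ (le_trans hm (Nat.le_add_right m (k+1))))
        (by positivity)
    have htsum : (∑' k : ℕ, ((1:ℝ)/3)^(k+1) * (ε/2)) = (ε/2) * (1/2) := by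
      rw [tsum_mul_right]
      have : (∑' k : ℕ, ((1:ℝ)/3)^(k+1)) = (1:ℝ)/2 := by
        have h := tsum_geometric_of_lt_one (by norm_num : (0:ℝ) ≤ 1/3) (by norm_num)
        calc (∑' k : ℕ, ((1:ℝ)/3)^(k+1)) = ∑' k : ℕ, ((1:ℝ)/3)^k * (1/3) := by
              simp [pow_succ]
          _ = (∑' k : ℕ, ((1:ℝ)/3)^k) * (1/3) := tsum_mul_right
          _ = (1:ℝ)/2 := by rw [h]; norm_num
      rw [this]; ring
    calc |∑' k : ℕ, ((1:ℝ)/3)^(k+1) * a (m + (k+1))| ≤ (ε/2) * (1/2) := by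
          rw [← htsum]; exact hbd
      _ < ε := by linarith
  -- combine
  have := (hA.add (hB.const_mul (2/7))).add (hC.const_mul (9/7))
  simp only [add_zero, mul_zero] at this
  convert this using 2 with m
  ring
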